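/- The delegative Banzhaf measure satisfies monotonicity with respect to direct delegations: given two liquid democracy elections E and E' on the same digraph, weights and quota, differing only in that some voter j (with j not lying on the delegation chain from i to i's guru in E) delegates directly to i in E' (d'(j)=i) while d'(l)=d(l) for all l≠j, we have DB_i(E') ≥ DB_i(E). -/
import Mathlib


open Finset
open scoped Classical

/-- Total weight of voters in `C` whose entire delegation chain (the iterates of `d`)
stays inside `C` (the "active" voters). -/
noncomputable def gamma {V : Type*} [Fintype V] (w : V → ℕ) (d : V → V) (C : Finset V) : ℕ :=
  ∑ i ∈ C, if ∀ k : ℕ, d^[k] i ∈ C then w i else 0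

/-- A coalition wins iff its active weight meets the quota. -/
def wins {V : Type*} [Fintype V] (w : V → ℕ) (d : V → V) (q : ℕ) (C : Finset V) : Prop :=
  q ≤ gamma w d C

/-- Voter `i` is a swing agent for coalition `C`. -/
noncomputable def swing {V : Type*} [Fintype V] (w : V → ℕ) (d : V → V) (q : ℕ)
    (i : V) (C : Finset V) : Prop :=
  ¬ wins w d q C ∧ wins w d q (insert i C)

/-- Number of coalitions `C ⊆ V \ {i}` for which `i` is a swing agent. -/
noncomputable def swingCount {V : Type*} [Fintype V] (w : V → ℕ) (d : V → V) (q : ℕ)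
    (i : V) : ℕ :=
  (((univ : Finset V).erase i).powerset.filter (fun C => swing w d q i C)).card

/-- Delegative Banzhaf measure. -/
noncomputable def DB {V : Type*} [Fintype V] (w : V → ℕ) (d : V → V) (q : ℕ) (i : V) : ℚ :=
  (swingCount w d q i : ℚ) / 2 ^ (Fintype.card V - 1)

/-- Delegative Shapley-Shubik index. -/
noncomputable def DS {V : Type*} [Fintype V] (w : V → ℕ) (d : V → V) (q : ℕ) (i : V) : ℚ :=
  ∑ C ∈ ((univ : Finset V).erase i).powerset,
    if swing w d q i C then
      (Nat.factorial C.card * Nat.factorial (Fintype.card V - C.card - 1) : ℚ) /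
        Nat.factorial (Fintype.card V)
    else 0

/-- Monotonicity w.r.t. direct delegations (MDD) for the delegative
Banzhaf measure: if E' differs from E only in that voter j (not on i's delegation
chain in E) delegates directly to i, then DB_i(E') ≥ DB_i(E). -/
theorem stmt2 {V : Type*} [Fintype V] (w : V → ℕ) (q : ℕ) (d d' : V → V) (i j : V)
    (hacyc : ∀ v, ∃ k, d (d^[k] v) = d^[k] v)
    (hacyc' : ∀ v, ∃ k, d' (d'^[k] v) = d'^[k] v)
    (hnotchain : ∀ k, d^[k] i ≠ j)
    (hdj : d' j = i)
    (hsame : ∀ l, l ≠ j → d' l = d l) :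
    DB w d q i ≤ DB w d' q i := by
  -- main step: swing for d implies swing for d'
  have hswing : ∀ C : Finset V, i ∉ C → swing w d q i C → swing w d' q i C := by
    intro C hiC hs
    -- if the d'-chain stays in C (with i ∉ C), it coincides with the d-chain
    have keyA : ∀ v, (∀ k, d'^[k] v ∈ C) → ∀ k, d'^[k] v = d^[k] v := by
      intro v hv k
      induction k with
      | zero => simp
      | succ k ih =>
        have hne : d'^[k] v ≠ j := by
          intro h
          have h2 := hv (k + 1)
          rw [Function.iterate_succ_apply', h, hdj] at h2
          exact hiC h2
        rw [Function.iterate_succ_apply', Function.iterate_succ_apply', hsame _ hne, ih]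
    have hgC : gamma w d' C ≤ gamma w d C := by
      unfold gamma
      apply Finset.sum_le_sum
      intro v hv
      split_ifs with h1 h2
      · exact le_rfl
      · exact absurd (fun k => (keyA v h1 k) ▸ h1 k) h2
      · exact Nat.zero_le _
      · exact Nat.zero_le _
    -- i's own d-chain must stay in insert i C, since i is swing
    have hchain_i : ∀ k, d^[k] i ∈ insert i C := by
      by_contra h
      push_neg at h
      obtain ⟨k0, hk0⟩ := h
      have h1 : ∀ v ∈ C, ((∀ k, d^[k] v ∈ insert i C) ↔ (∀ k, d^[k] v ∈ C)) := by
        intro v hv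
        constructor
        · intro hin k
          have hvne : d^[k] v ≠ i := by
            intro hm
            apply hk0
            have : d^[k + k0] v ∈ insert i C := hin (k + k0)
            rwa [Nat.add_comm, Function.iterate_add_apply, hm] at this
          rcases Finset.mem_insert.mp (hin k) with h' | h'
          · exact absurd h' hvne
          · exact h'
        · intro h' k
          exact Finset.mem_insert_of_mem (h' k)
      have heq : gamma w d (insert i C) = gamma w d C := by
        unfold gamma
        rw [Finset.sum_insert hiC, if_neg (fun h' => hk0 (h' k0)), zero_add]
        exact Finset.sum_congr rfl (fun v hv => if_congr (h1 v hv) rfl rfl)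
      have h2 := hs.2
      unfold wins at h2
      rw [heq] at h2
      exact hs.1 h2
      -- every d'-iterate is either a d-iterate of v or a d-iterate of i
    have keyB0 : ∀ v, ∀ k, d'^[k] v = d^[k] v ∨ ∃ m, d'^[k] v = d^[m] i := by
      intro v k
      induction k with
      | zero => left; simp
      | succ k ih =>
        rcases ih with h | ⟨m, h⟩
        · by_cases hj : d^[k] v = j
          · right
            exact ⟨0, by rw [Function.iterate_succ_apply', h, hj, hdj]; simp⟩
          · left
            rw [Function.iterate_succ_apply', Function.iterate_succ_apply', h,
              hsame _ (h ▸ hj)]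
        · right
          refine ⟨m + 1, ?_⟩
          rw [Function.iterate_succ_apply', h, hsame _ (hnotchain m),
            Function.iterate_succ_apply']
    have hgS : gamma w d (insert i C) ≤ gamma w d' (insert i C) := by
      unfold gamma
      apply Finset.sum_le_sum
      intro v hv
      split_ifs with h1 h2
      · exact le_rfl
      · refine absurd (fun k => ?_) h2
        rcases keyB0 v k with h | ⟨m, h⟩
        · exact h ▸ h1 k
        · exact h ▸ hchain_i m
      · exact Nat.zero_le _
      · exact Nat.zero_le _
    exact ⟨fun h => hs.1 (le_trans h hgC), le_trans hs.2 hgS⟩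
  have hmono : swingCount w d q i ≤ swingCount w d' q i := by
    apply Finset.card_le_card
    intro C hC
    rw [Finset.mem_filter] at hC ⊢
    refine ⟨hC.1, hswing C ?_ hC.2⟩
    intro hiC
    exact (Finset.mem_erase.mp (Finset.mem_powerset.mp hC.1 hiC)).1 rfl
  unfold DB
  gcongr
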